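/- Let h(x) = ⌊(x+1)²/3⌋ and B_m = {(x,y) ∈ ℤ×ℤ : |x| ≤ m and |y| ≤ h(m−|x|)}. Then for all m ≥ 0 the cardinality of B_m satisfies 9·|B_m| = 4m³ + 12m² + 24m + 5 + 2·((m+2) mod 3). -/

import Mathlib

/-!
For `h x = ⌊(x+1)²/3⌋` and `B_m = {(x,y) ∈ ℤ×ℤ : |x| ≤ m ∧ |y| ≤ h (m - |x|)}`,
we have `9·|B_m| = 4m³ + 12m² + 24m + 5 + 2·((m+2) mod 3)` for all `m ≥ 0`.
-/

namespace Stmt5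

/-- `h x = ⌊(x+1)²/3⌋`. -/
def hfun (x : ℕ) : ℕ := (x + 1) ^ 2 / 3

/-- The set `B_m = {(x,y) ∈ ℤ×ℤ : |x| ≤ m, |y| ≤ h(m - |x|)}`, as a `Finset`. -/
noncomputable def Bfin (h : ℕ → ℕ) (m : ℕ) : Finset (ℤ × ℤ) :=
  ((Finset.Icc (-(m : ℤ)) (m : ℤ)) ×ˢ
      (Finset.Icc (-(((Finset.range (m + 1)).sup h : ℕ) : ℤ))
        (((Finset.range (m + 1)).sup h : ℕ) : ℤ))).filter
    (fun p => p.2.natAbs ≤ h (m - p.1.natAbs))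

open Finset

lemma card_eq_sum (h : ℕ → ℕ) (m : ℕ) :
    (Bfin h m).card = ∑ x ∈ Icc (-(m:ℤ)) m, (2 * h (m - x.natAbs) + 1) := by
  set M : ℕ := (Finset.range (m + 1)).sup h with hM
  have key : Bfin h m = (Icc (-(m:ℤ)) m).biUnion
      (fun x => {x} ×ˢ Icc (-(h (m - x.natAbs) : ℤ)) (h (m - x.natAbs))) := by
    ext ⟨x, y⟩
    have hle : h (m - x.natAbs) ≤ M := Finset.le_sup (by
      simp [Finset.mem_range])
    simp only [Bfin, Finset.mem_filter, Finset.mem_product, Finset.mem_Icc,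
      Finset.mem_biUnion, Finset.mem_singleton, Finset.mem_product, Finset.mem_Icc]
    constructor
    · rintro ⟨⟨hx, hy⟩, hp⟩
      exact ⟨x, hx, rfl, by omega⟩
    · rintro ⟨z, hz, hxz, hy⟩
      subst hxz
      exact ⟨⟨hz, by omega⟩, by omega⟩
  rw [key, Finset.card_biUnion]
  · refine Finset.sum_congr rfl fun x hx => ?_
    rw [Finset.card_product, Finset.card_singleton, one_mul, Int.card_Icc]
    omega
  · intro a _ b _ hab
    simp only [Finset.disjoint_left]
    rintro ⟨x, y⟩ hx hy
    simp only [Finset.mem_product, Finset.mem_singleton] at hx hy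
    exact hab (hx.1 ▸ hy.1 ▸ rfl)

lemma sum_Icc_natAbs (f : ℕ → ℕ) (m : ℕ) :
    ∑ x ∈ Icc (-(m:ℤ)) m, f x.natAbs = f 0 + 2 * ∑ k ∈ Icc 1 m, f k := by
  induction m with
  | zero => simp
  | succ m ih =>
    have h1 : Finset.Icc (-((m+1:ℕ):ℤ)) ((m+1:ℕ):ℤ) =
        insert (-((m+1:ℕ):ℤ)) (insert ((m+1:ℕ):ℤ) (Finset.Icc (-(m:ℤ)) (m:ℤ))) := by
      ext x; simp [Finset.mem_Icc, Finset.mem_insert]; omega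
    have h2 : (-((m+1:ℕ):ℤ)) ∉ insert ((m+1:ℕ):ℤ) (Finset.Icc (-(m:ℤ)) (m:ℤ)) := by
      simp [Finset.mem_Icc]; omega
    have h3 : ((m+1:ℕ):ℤ) ∉ Finset.Icc (-(m:ℤ)) (m:ℤ) := by
      simp [Finset.mem_Icc]
    have h4 : Finset.Icc 1 (m+1) = insert (m+1) (Finset.Icc 1 m) := by
      ext k; simp [Finset.mem_Icc, Finset.mem_insert]; omega
    have h5 : (m+1) ∉ Finset.Icc 1 m := by simp
    rw [h1, Finset.sum_insert h2, Finset.sum_insert h3, ih, h4, Finset.sum_insert h5]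
    have e1 : ((-((m+1:ℕ):ℤ)).natAbs) = m + 1 := by
      rw [Int.natAbs_neg]; exact Int.natAbs_natCast _
    have e2 : (((m+1:ℕ):ℤ)).natAbs = m + 1 := Int.natAbs_natCast _
    rw [e1, e2]; ring

lemma sum_reindex (g : ℕ → ℕ) (m : ℕ) :
    ∑ k ∈ Icc 1 m, g (m - k) = ∑ j ∈ range m, g j := by
  refine Finset.sum_nbij' (fun k => m - k) (fun j => m - j) ?_ ?_ ?_ ?_ ?_ <;>
    intros <;> simp_all [Finset.mem_Icc, Finset.mem_range] <;> omega

lemma hfun_0 (q : ℕ) : hfun (3*q) = 3*q^2 + 2*q := by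
  have : (3*q + 1)^2 = 3*(3*q^2+2*q) + 1 := by ring
  simp [hfun, this, Nat.mul_add_div]

lemma hfun_1 (q : ℕ) : hfun (3*q+1) = 3*q^2 + 4*q + 1 := by
  have : (3*q + 1 + 1)^2 = 3*(3*q^2+4*q+1) + 1 := by ring
  simp [hfun, this, Nat.mul_add_div]

lemma hfun_2 (q : ℕ) : hfun (3*q+2) = 3*q^2 + 6*q + 3 := by
  have : (3*q + 2 + 1)^2 = 3*(3*q^2+6*q+3) := by ring
  simp [hfun, this, Nat.mul_div_cancel_left]

/-- `S m = ∑_{j<m} (2·hfun j + 1)`. -/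
def S (m : ℕ) : ℕ := ∑ j ∈ range m, (2 * hfun j + 1)

lemma S_0 (q : ℕ) : S (3*q) = 6*q^3 + 3*q^2 + 2*q := by
  induction q with
  | zero => simp [S]
  | succ q ih =>
    have e : 3*(q+1) = (3*q + 1) + 1 + 1 := by ring
    rw [e]
    simp only [S, Finset.sum_range_succ] at ih ⊢
    have : (3*q+1)+1 = 3*q+2 := rfl
    rw [this, hfun_1, hfun_2]
    calc S (3*q) + (2 * hfun (3*q) + 1) + (2*(3*q^2+4*q+1)+1) + (2*(3*q^2+6*q+3)+1)
        = (6*q^3+3*q^2+2*q) + (2*(3*q^2+2*q)+1) + (2*(3*q^2+4*q+1)+1) + (2*(3*q^2+6*q+3)+1) := by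
          rw [show S (3*q) = 6*q^3+3*q^2+2*q from by
            simpa [S, Finset.sum_range_succ] using ih, hfun_0]
      _ = 6*(q+1)^3 + 3*(q+1)^2 + 2*(q+1) := by ring

lemma S_1 (q : ℕ) : S (3*q+1) = 6*q^3 + 9*q^2 + 6*q + 1 := by
  have : S (3*q+1) = S (3*q) + (2 * hfun (3*q) + 1) := Finset.sum_range_succ _ _
  rw [this, S_0, hfun_0]; ring

lemma S_2 (q : ℕ) : S (3*q+2) = 6*q^3 + 15*q^2 + 14*q + 4 := by
  have : S (3*q+2) = S (3*q+1) + (2 * hfun (3*q+1) + 1) := Finset.sum_range_succ _ _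
  rw [this, S_1, hfun_1]; ring

lemma card_closed (m : ℕ) : (Bfin hfun m).card = 2 * hfun m + 1 + 2 * S m := by
  rw [card_eq_sum]
  rw [sum_Icc_natAbs (fun k => 2 * hfun (m - k) + 1) m]
  rw [sum_reindex (fun j => 2 * hfun j + 1) m]
  simp [S]

/-- **Cardinality of `B_m`.** -/
theorem card_Bm (m : ℕ) :
    9 * (Bfin hfun m).card = 4 * m ^ 3 + 12 * m ^ 2 + 24 * m + 5 + 2 * ((m + 2) % 3) := by
  rw [card_closed]
  obtain ⟨q, r, hr, rfl⟩ : ∃ q r, r < 3 ∧ m = 3*q + r :=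
    ⟨m / 3, m % 3, Nat.mod_lt _ (by norm_num), by omega⟩
  interval_cases r
  · rw [show 3*q+0 = 3*q from rfl, hfun_0, S_0,
      show (3*q+2) % 3 = 2 from by omega]
    ring
  · rw [hfun_1, S_1, show (3*q+1+2) % 3 = 0 from by omega]
    ring
  · rw [hfun_2, S_2, show (3*q+2+2) % 3 = 1 from by omega]
    ring

end Stmt5
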